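/- Let G be an LWF chain graph and T ∈ V. Then Mb(T) is the unique inclusion-minimal set S ⊆ V∖{T} such that T is c-separated from every vertex of V∖({T}∪S) given S; that is, Mb(T) has this separating property, and every set S ⊆ V∖{T} with this property satisfies Mb(T) ⊆ S. -/
import Mathlib


/- Formalization of LWF chain graphs, routes, sections, c-separation,
   minimal complexes, Markov blankets, moral graphs, and ancestral sets. -/

namespace LWF

/-- An LWF chain graph: a mixed graph with directed edges `dir` and (symmetric)
undirected edges `undir`, no loops, no pair of vertices joined by more than one
edge, and no partially directed cycles. -/
structure ChainGraph (V : Type*) where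
  dir : V → V → Prop
  undir : V → V → Prop
  undir_symm : ∀ u v, undir u v → undir v u
  dir_irrefl : ∀ v, ¬ dir v v
  undir_irrefl : ∀ v, ¬ undir v v
  dir_asymm : ∀ u v, dir u v → ¬ dir v u
  dir_not_undir : ∀ u v, dir u v → ¬ undir u v
  /-- No partially directed cycle: there is no sequence `ρ 0, …, ρ n` (`n ≥ 2`)
  with `ρ n = ρ 0`, the vertices `ρ 0, …, ρ (n-1)` distinct, every consecutive
  pair joined by `dir` or `undir` (in the forward direction), and at least one
  forward directed edge on it. -/
  no_partially_directed_cycle :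
    ∀ (n : ℕ) (ρ : ℕ → V), 2 ≤ n → ρ n = ρ 0 →
      (∀ i j, i < j → j < n → ρ i ≠ ρ j) →
      (∀ i, i < n → dir (ρ i) (ρ (i+1)) ∨ undir (ρ i) (ρ (i+1))) →
      ¬ ∃ i, i < n ∧ dir (ρ i) (ρ (i+1))

namespace ChainGraph

variable {V : Type*}

/-- Two vertices are adjacent if they are joined by a directed or an undirected edge. -/
def Adj (G : ChainGraph V) (u v : V) : Prop := G.dir u v ∨ G.dir v u ∨ G.undir u v

/-- A partially directed path from `u` to `w`: a sequence of distinct vertices,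
each consecutive pair joined by a forward directed or an undirected edge, with
at least one directed edge on it. -/
def PDPath (G : ChainGraph V) (u w : V) : Prop :=
  ∃ (n : ℕ) (ρ : ℕ → V), 1 ≤ n ∧ ρ 0 = u ∧ ρ n = w ∧
    (∀ i j, i ≤ n → j ≤ n → i ≠ j → ρ i ≠ ρ j) ∧
    (∀ i, i < n → G.dir (ρ i) (ρ (i+1)) ∨ G.undir (ρ i) (ρ (i+1))) ∧
    (∃ i, i < n ∧ G.dir (ρ i) (ρ (i+1)))

/-- `an(Z)`: the set of vertices having a partially directed path to some vertex of `Z`. -/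
def anc (G : ChainGraph V) (Z : Set V) : Set V := {x | ∃ z ∈ Z, G.PDPath x z}

/-- Parents of `v`. -/
def pa (G : ChainGraph V) (v : V) : Set V := {u | G.dir u v}

/-- Children of `v`. -/
def ch (G : ChainGraph V) (v : V) : Set V := {u | G.dir v u}

/-- Neighbours of `v`. -/
def nb (G : ChainGraph V) (v : V) : Set V := {u | G.undir u v}

/-- A minimal complex `a → ρ 1 − ⋯ − ρ n ← b` (with `ρ 0 = a`, `ρ (n+1) = b`,
`n ≥ 1`): all vertices distinct, the indicated edges present, and it is an
induced subgraph, i.e. the only adjacencies among its vertices are between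
consecutive ones (in particular `a` and `b` are non-adjacent). -/
def IsMinimalComplex (G : ChainGraph V) (a b : V) (n : ℕ) (ρ : ℕ → V) : Prop :=
  1 ≤ n ∧ ρ 0 = a ∧ ρ (n+1) = b ∧
  (∀ i j, i ≤ n+1 → j ≤ n+1 → i ≠ j → ρ i ≠ ρ j) ∧
  G.dir a (ρ 1) ∧ G.dir b (ρ n) ∧
  (∀ i, 1 ≤ i → i < n → G.undir (ρ i) (ρ (i+1))) ∧
  (∀ i j, i ≤ n+1 → j ≤ n+1 → G.Adj (ρ i) (ρ j) → j = i+1 ∨ i = j+1)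

/-- Complex-spouses of `a`. -/
def csp (G : ChainGraph V) (a : V) : Set V := {b | ∃ n ρ, G.IsMinimalComplex a b n ρ}

/-- The Markov blanket of `T`: parents, neighbours, children and complex-spouses of `T`. -/
def mb (G : ChainGraph V) (T : V) : Set V := G.pa T ∪ G.nb T ∪ G.ch T ∪ G.csp T

/-- A route in `G`: a sequence of `len + 1` vertices `vtx 0, …, vtx len`
(hence nonempty), each consecutive pair joined by an edge of `G`. -/
structure Route (G : ChainGraph V) where
  len : ℕ
  vtx : ℕ → V
  link : ∀ i, i < len → G.Adj (vtx i) (vtx (i+1))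

/-- The positions `a, …, b` of the route form a section: all steps inside are
undirected edges, and the run is maximal on both sides. -/
def Route.IsSection {G : ChainGraph V} (ω : Route G) (a b : ℕ) : Prop :=
  a ≤ b ∧ b ≤ ω.len ∧
  (∀ k, a ≤ k → k < b → G.undir (ω.vtx k) (ω.vtx (k+1))) ∧
  (0 < a → ¬ G.undir (ω.vtx (a-1)) (ω.vtx a)) ∧
  (b < ω.len → ¬ G.undir (ω.vtx b) (ω.vtx (b+1)))

/-- A collider section: a section which the route enters by an arrowhead at both
ends, i.e. `vtx (a-1) → vtx a − ⋯ − vtx b ← vtx (b+1)` occurs on the route. -/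
def Route.IsColliderSection {G : ChainGraph V} (ω : Route G) (a b : ℕ) : Prop :=
  ω.IsSection a b ∧ 0 < a ∧ b < ω.len ∧
  G.dir (ω.vtx (a-1)) (ω.vtx a) ∧ G.dir (ω.vtx (b+1)) (ω.vtx b)

/-- A route is active with respect to `Z` if every collider section of it
contains a vertex of `Z ∪ an(Z)` and no vertex of any non-collider section is in `Z`. -/
def Route.Active {G : ChainGraph V} (ω : Route G) (Z : Set V) : Prop :=
  (∀ a b, ω.IsColliderSection a b → ∃ k, a ≤ k ∧ k ≤ b ∧ ω.vtx k ∈ Z ∪ G.anc Z) ∧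
  (∀ a b, ω.IsSection a b → ¬ ω.IsColliderSection a b →
    ∀ k, a ≤ k → k ≤ b → ω.vtx k ∉ Z)

/-- A route is intercepted (blocked) by `Z` if it is not active with respect to `Z`. -/
def Route.Intercepted {G : ChainGraph V} (ω : Route G) (Z : Set V) : Prop :=
  ¬ ω.Active Z

/-- `X` and `Y` are c-separated given `Z`: every route between a vertex of `X`
and a vertex of `Y` is intercepted by `Z`. -/
def CSep (G : ChainGraph V) (X Y Z : Set V) : Prop :=
  ∀ ω : Route G,
    ((ω.vtx 0 ∈ X ∧ ω.vtx ω.len ∈ Y) ∨ (ω.vtx 0 ∈ Y ∧ ω.vtx ω.len ∈ X)) →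
    ω.Intercepted Z

/-- Moral graph adjacency: distinct `u`, `v` are adjacent in `G^m` iff they are
adjacent in `G` or are complex-spouses. -/
def MoralAdj (G : ChainGraph V) (u v : V) : Prop :=
  u ≠ v ∧ (G.dir u v ∨ G.dir v u ∨ G.undir u v ∨ u ∈ G.csp v ∨ v ∈ G.csp u)

/-- A set `A` is ancestral if it contains the boundary (parents and neighbours)
of each of its elements. -/
def Ancestral (G : ChainGraph V) (A : Set V) : Prop :=
  ∀ a ∈ A, ∀ u, (G.dir u a ∨ G.undir u a) → u ∈ A

/-- `An(A)`: the smallest ancestral set containing `A`. -/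
def An (G : ChainGraph V) (A : Set V) : Set V :=
  ⋂₀ {B : Set V | A ⊆ B ∧ G.Ancestral B}

/-- A minimal complex of the induced subgraph `G_A`: a minimal complex of `G`
all of whose vertices lie in `A`. -/
def IsMinimalComplexIn (G : ChainGraph V) (A : Set V) (a b : V) (n : ℕ) (ρ : ℕ → V) : Prop :=
  G.IsMinimalComplex a b n ρ ∧ ∀ i, i ≤ n+1 → ρ i ∈ A

/-- Adjacency in the moral graph `(G_A)^m` of the induced subgraph of `G` on `A`:
distinct `u, v ∈ A` joined by an edge of `G`, or complex-spouses in `G_A`. -/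
def MoralAdjIn (G : ChainGraph V) (A : Set V) (u v : V) : Prop :=
  u ∈ A ∧ v ∈ A ∧ u ≠ v ∧
    (G.dir u v ∨ G.dir v u ∨ G.undir u v ∨
      (∃ n ρ, G.IsMinimalComplexIn A u v n ρ) ∨ (∃ n ρ, G.IsMinimalComplexIn A v u n ρ))

end ChainGraph

/-- A path from `u` to `v` in an undirected graph with adjacency relation `R`:
a sequence of `n + 1 ≥ 2` distinct vertices `ρ 0 = u, …, ρ n = v` with each
consecutive pair adjacent. -/
def UPath {V : Type*} (R : V → V → Prop) (u v : V) (n : ℕ) (ρ : ℕ → V) : Prop :=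
  1 ≤ n ∧ ρ 0 = u ∧ ρ n = v ∧
  (∀ i j, i ≤ n → j ≤ n → i ≠ j → ρ i ≠ ρ j) ∧
  (∀ i, i < n → R (ρ i) (ρ (i+1)))

end LWF

namespace LWF

namespace ChainGraph

variable {V : Type*} (G : ChainGraph V)

lemma adj_symm {u v : V} (h : G.Adj u v) : G.Adj v u := by
  rcases h with h | h | h
  · exact Or.inr (Or.inl h)
  · exact Or.inl h
  · exact Or.inr (Or.inr (G.undir_symm _ _ h))

lemma adj_irrefl (v : V) : ¬ G.Adj v v := by
  rintro (h | h | h)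
  exacts [G.dir_irrefl v h, G.dir_irrefl v h, G.undir_irrefl v h]

/-- Splicing out a portion of an undirected walk. -/
lemma splice_walk (σ : ℕ → V) (n c i : ℕ) (hi : i < n - c)
    (hw : ∀ k < n, G.undir (σ k) (σ (k+1)))
    (hbr : G.undir (σ i) (σ (i+1+c))) :
    ∃ σ' : ℕ → V, σ' 0 = σ 0 ∧ σ' (n-c) = σ n ∧
      ∀ k < n - c, G.undir (σ' k) (σ' (k+1)) := by
  refine ⟨fun k => if k ≤ i then σ k else σ (k + c), ?_, ?_, ?_⟩
  · beta_reduce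
    rw [if_pos (Nat.zero_le _)]
  · beta_reduce
    rw [if_neg (by omega)]
    exact congrArg σ (by omega)
  · intro k hk
    beta_reduce
    rcases lt_trichotomy k i with h1 | rfl | h1
    · rw [if_pos (by omega), if_pos (by omega)]
      exact hw k (by omega)
    · rw [if_pos le_rfl, if_neg (by omega)]
      exact hbr
    · rw [if_neg (by omega), if_neg (by omega)]
      have := hw (k + c) (by omega)
      have e : k + c + 1 = k + 1 + c := by omega
      rw [e] at this
      exact this

/-- There is no directed edge from `σ 0` to `σ n` if there is an undirected
walk `σ 0 − ⋯ − σ n`. -/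
lemma no_dir_of_uwalk : ∀ (n : ℕ) (σ : ℕ → V),
    (∀ i < n, G.undir (σ i) (σ (i+1))) → ¬ G.dir (σ 0) (σ n) := by
  intro n
  induction n using Nat.strong_induction_on with
  | _ n IH =>
  intro σ hw hd
  by_cases hinj : ∀ i j, i < j → j ≤ n → σ i ≠ σ j
  · rcases Nat.eq_zero_or_pos n with rfl | hn
    · exact G.dir_irrefl _ hd
    · -- build a partially directed cycle σ 0 → σ n − σ (n-1) − ⋯ − σ 0
      refine G.no_partially_directed_cycle (n+1)
        (fun k => if k = 0 then σ 0 else σ (n + 1 - k)) (by omega) ?_ ?_ ?_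
        ⟨0, by omega, ?_⟩
      · beta_reduce
        rw [if_neg (by omega), if_pos rfl]
        exact congrArg σ (by omega)
      · intro i j hij hjn
        beta_reduce
        rcases Nat.eq_zero_or_pos i with rfl | hi
        · rw [if_pos rfl, if_neg (by omega)]
          exact hinj 0 (n+1-j) (by omega) (by omega)
        · rw [if_neg (by omega), if_neg (by omega)]
          intro h
          exact hinj (n+1-j) (n+1-i) (by omega) (by omega) h.symm
      · intro i hi
        beta_reduce
        rcases Nat.eq_zero_or_pos i with rfl | hi0
        · left
          rw [if_pos rfl, if_neg (by omega)]
          have e : n + 1 - (0+1) = n := by omega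
          rw [e]; exact hd
        · right
          rw [if_neg (by omega), if_neg (by omega)]
          have := hw (n - i) (by omega)
          have e1 : n - i + 1 = n + 1 - i := by omega
          have e2 : n + 1 - (i+1) = n - i := by omega
          rw [e1] at this
          rw [e2]
          exact G.undir_symm _ _ this
      · beta_reduce
        rw [if_pos rfl, if_neg (by omega)]
        have e : n + 1 - (0+1) = n := by omega
        rw [e]; exact hd
  · push_neg at hinj
    obtain ⟨i, j, hij, hjn, heq⟩ := hinj
    rcases eq_or_lt_of_le hjn with rfl | hjn'
    · refine IH i hij σ (fun k hk => hw k (by omega)) ?_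
      rw [heq]; exact hd
    · obtain ⟨σ', h0, hn', hw'⟩ := G.splice_walk σ n (j - i) i (by omega) hw
        (by rw [show i+1+(j-i) = j+1 from by omega, heq]; exact hw j (by omega))
      refine IH (n - (j-i)) (by omega) σ' hw' ?_
      rw [h0, hn']; exact hd

/-- There is no pair of directed edges `t → σ 0` and `σ m → t` around an
undirected path `σ 0 − ⋯ − σ m` (it would create a partially directed cycle). -/
lemma no_dir_path_dir (t : V) (m : ℕ) (σ : ℕ → V)
    (hw : ∀ i < m, G.undir (σ i) (σ (i+1)))
    (hinj : ∀ i j, i < j → j ≤ m → σ i ≠ σ j)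
    (h1 : G.dir t (σ 0)) : ¬ G.dir (σ m) t := by
  intro h2
  have ht : ∀ k ≤ m, t ≠ σ k := by
    intro k hk heq
    rcases Nat.eq_zero_or_pos k with rfl | hk0
    · exact G.dir_irrefl _ (heq ▸ h1)
    · refine G.no_dir_of_uwalk k (fun j => σ (k - j)) ?_ ?_
      · intro j hj
        beta_reduce
        have := hw (k - j - 1) (by omega)
        have e1 : k - j - 1 + 1 = k - j := by omega
        have e2 : k - (j+1) = k - j - 1 := by omega
        rw [e1] at this
        rw [e2]
        exact G.undir_symm _ _ this
      · beta_reduce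
        rw [show k - 0 = k from rfl, show k - k = 0 from by omega, ← heq]
        exact h1
  refine G.no_partially_directed_cycle (m+2)
    (fun k => if k = 0 ∨ k = m+2 then t else σ (k-1)) (by omega) ?_ ?_ ?_
    ⟨0, by omega, ?_⟩
  · beta_reduce
    rw [if_pos (Or.inr rfl), if_pos (Or.inl rfl)]
  · intro i j hij hjm
    beta_reduce
    rcases Nat.eq_zero_or_pos i with rfl | hi
    · rw [if_pos (Or.inl rfl), if_neg (by omega)]
      exact ht (j-1) (by omega)
    · rw [if_neg (by omega), if_neg (by omega)]
      exact hinj (i-1) (j-1) (by omega) (by omega)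
  · intro i hi
    beta_reduce
    rcases Nat.eq_zero_or_pos i with rfl | hi0
    · left
      rw [if_pos (Or.inl rfl), if_neg (by omega)]
      exact h1
    · rcases eq_or_lt_of_le (show i ≤ m+1 from by omega) with rfl | him
      · left
        rw [if_neg (by omega), if_pos (Or.inr rfl), show m+1-1 = m from rfl]
        exact h2
      · right
        rw [if_neg (by omega), if_neg (by omega)]
        have := hw (i-1) (by omega)
        rw [show i-1+1 = i from by omega] at this
        rw [show i+1-1 = i from rfl]
        exact this
  · beta_reduce
    rw [if_pos (Or.inl rfl), if_neg (by omega)]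
    exact h1

/-- Extraction of a minimal complex: if `T → x`, `w → y`, there is an undirected
walk from `x` to `y`, and `T`, `w` are distinct and non-adjacent, then `w` is a
complex-spouse of `T`. -/
lemma csp_of_walk (T w x y : V) (hTw : ¬ G.Adj T w) (hne : T ≠ w)
    (hTx : G.dir T x) (hwy : G.dir w y)
    (m : ℕ) (σ : ℕ → V) (hσ0 : σ 0 = x) (hσm : σ m = y)
    (hwk : ∀ i < m, G.undir (σ i) (σ (i+1))) :
    w ∈ G.csp T := by
  classical
  have hex : ∃ n : ℕ, ∃ ρ : ℕ → V,
      G.dir T (ρ 0) ∧ G.dir w (ρ n) ∧ ∀ i < n, G.undir (ρ i) (ρ (i+1)) :=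
    ⟨m, σ, by rw [hσ0]; exact hTx, by rw [hσm]; exact hwy, hwk⟩
  obtain ⟨ρ, hT0, hwn, hρw⟩ := Nat.find_spec hex
  set n := Nat.find hex with hn
  have hmin : ∀ k, k < n → ¬ ∃ ρ : ℕ → V,
      G.dir T (ρ 0) ∧ G.dir w (ρ k) ∧ ∀ i < k, G.undir (ρ i) (ρ (i+1)) :=
    fun k hk => Nat.find_min hex hk
  -- injectivity
  have hinj : ∀ i j, i < j → j ≤ n → ρ i ≠ ρ j := by
    intro i j hij hjn heq
    rcases eq_or_lt_of_le hjn with rfl | hjn'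
    · exact hmin i hij ⟨ρ, hT0, by rw [heq]; exact hwn, fun k hk => hρw k (by omega)⟩
    · obtain ⟨σ', h0, hn', hw'⟩ := G.splice_walk ρ n (j - i) i (by omega) hρw
        (by rw [show i+1+(j-i) = j+1 from by omega, heq]; exact hρw j (by omega))
      exact hmin (n - (j-i)) (by omega)
        ⟨σ', by rw [h0]; exact hT0, by rw [hn']; exact hwn, hw'⟩
  -- no undirected chord
  have hchord : ∀ i j, i+1 < j → j ≤ n → ¬ G.undir (ρ i) (ρ j) := by
    intro i j hij hjn hu
    obtain ⟨σ', h0, hn', hw'⟩ := G.splice_walk ρ n (j - i - 1) i (by omega) hρw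
      (by rw [show i+1+(j-i-1) = j from by omega]; exact hu)
    exact hmin (n - (j-i-1)) (by omega)
      ⟨σ', by rw [h0]; exact hT0, by rw [hn']; exact hwn, hw'⟩
  -- no directed edge from T into the interior
  have hTdir : ∀ k, 1 ≤ k → k ≤ n → ¬ G.dir T (ρ k) := by
    intro k h1 h2 hd
    refine hmin (n - k) (by omega) ⟨fun j => ρ (k + j), hd, ?_, ?_⟩
    · beta_reduce
      rw [show k + (n - k) = n from by omega]; exact hwn
    · intro i hi; exact hρw (k + i) (by omega)
  -- no directed edge from w into the interior (except the last vertex)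
  have hwdir : ∀ k, k < n → ¬ G.dir w (ρ k) := by
    intro k hk hd
    exact hmin k hk ⟨ρ, hT0, hd, fun i hi => hρw i (by omega)⟩
  -- no directed edge into T
  have hdirT : ∀ k ≤ n, ¬ G.dir (ρ k) T := by
    intro k hk
    exact G.no_dir_path_dir T k ρ (fun i hi => hρw i (by omega))
      (fun i j hij hjk => hinj i j hij (by omega)) hT0
  -- no directed edge into w
  have hdirw : ∀ k ≤ n, ¬ G.dir (ρ k) w := by
    intro k hk
    have := G.no_dir_path_dir w (n - k) (fun j => ρ (n - j)) ?_ ?_ ?_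
    · intro hd
      apply this
      rw [show n - (n - k) = k from by omega]
      exact hd
    · intro i hi
      beta_reduce
      have := hρw (n - i - 1) (by omega)
      rw [show n - i - 1 + 1 = n - i from by omega] at this
      rw [show n - (i+1) = n - i - 1 from by omega]
      exact G.undir_symm _ _ this
    · intro i j hij hjk
      beta_reduce
      intro h
      exact hinj (n - j) (n - i) (by omega) (by omega) h.symm
    · beta_reduce
      rw [show n - 0 = n from rfl]
      exact hwn
  -- no undirected edge from T
  have hTund : ∀ k ≤ n, ¬ G.undir T (ρ k) := by
    intro k hk hu
    refine G.no_dir_of_uwalk (k+1) (fun j => if j = 0 then T else ρ (k+1-j)) ?_ ?_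
    · intro j hj
      beta_reduce
      rcases Nat.eq_zero_or_pos j with rfl | hj0
      · rw [if_pos rfl, if_neg (by omega), show k+1-(0+1) = k from by omega]
        exact hu
      · rw [if_neg (by omega), if_neg (by omega)]
        have := hρw (k - j) (by omega)
        rw [show k - j + 1 = k + 1 - j from by omega] at this
        rw [show k + 1 - (j+1) = k - j from by omega]
        exact G.undir_symm _ _ this
    · beta_reduce
      rw [if_pos rfl, if_neg (by omega), show k+1-(k+1) = 0 from by omega]
      exact hT0
  -- no undirected edge from w
  have hwund : ∀ k ≤ n, ¬ G.undir w (ρ k) := by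
    intro k hk hu
    refine G.no_dir_of_uwalk (n-k+1) (fun j => if j = 0 then w else ρ (k+j-1)) ?_ ?_
    · intro j hj
      beta_reduce
      rcases Nat.eq_zero_or_pos j with rfl | hj0
      · rw [if_pos rfl, if_neg (by omega), show k+(0+1)-1 = k from by omega]
        exact hu
      · rw [if_neg (by omega), if_neg (by omega)]
        have := hρw (k + j - 1) (by omega)
        rw [show k+(j+1)-1 = k+j-1+1 from by omega]
        exact this
    · beta_reduce
      rw [if_pos rfl, if_neg (by omega), show k+(n-k+1)-1 = n from by omega]
      exact hwn
  -- T and w are distinct from all walk vertices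
  have hTne : ∀ k ≤ n, T ≠ ρ k := by
    intro k hk heq
    rcases Nat.eq_zero_or_pos k with rfl | hk0
    · exact G.dir_irrefl _ (by rw [heq] at hT0; exact hT0)
    · refine G.no_dir_of_uwalk k (fun j => ρ (k - j)) ?_ ?_
      · intro j hj
        beta_reduce
        have := hρw (k - j - 1) (by omega)
        rw [show k - j - 1 + 1 = k - j from by omega] at this
        rw [show k - (j+1) = k - j - 1 from by omega]
        exact G.undir_symm _ _ this
      · beta_reduce
        rw [show k - 0 = k from rfl, show k - k = 0 from by omega, ← heq]
        exact hT0
  have hwne : ∀ k ≤ n, w ≠ ρ k := by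
    intro k hk heq
    rcases eq_or_lt_of_le hk with rfl | hk'
    · exact G.dir_irrefl _ (by rw [heq] at hwn; exact hwn)
    · refine G.no_dir_of_uwalk (n - k) (fun j => ρ (k + j)) ?_ ?_
      · intro j hj
        beta_reduce
        exact hρw (k + j) (by omega)
      · beta_reduce
        rw [show k + 0 = k from rfl, show k + (n - k) = n from by omega, ← heq]
        exact hwn
  -- no directed edge between walk vertices
  have hnodir : ∀ i j, i ≤ n → j ≤ n → i ≠ j → ¬ G.dir (ρ i) (ρ j) := by
    intro i j hi hj hij hd
    rcases lt_or_gt_of_ne hij with h | h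
    · refine G.no_dir_of_uwalk (j - i) (fun t => ρ (i + t)) ?_ ?_
      · intro k hk
        beta_reduce
        exact hρw (i + k) (by omega)
      · beta_reduce
        rw [show i + 0 = i from rfl, show i + (j - i) = j from by omega]
        exact hd
    · refine G.no_dir_of_uwalk (i - j) (fun t => ρ (i - t)) ?_ ?_
      · intro k hk
        beta_reduce
        have := hρw (i - k - 1) (by omega)
        rw [show i - k - 1 + 1 = i - k from by omega] at this
        rw [show i - (k+1) = i - k - 1 from by omega]
        exact G.undir_symm _ _ this
      · beta_reduce
        rw [show i - 0 = i from rfl, show i - (i - j) = j from by omega]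
        exact hd
  -- assemble the minimal complex T → ρ 0 − ⋯ − ρ n ← w
  refine ⟨n+1, fun k => if k = 0 then T else if k = n+2 then w else ρ (k-1), ?_⟩
  set ρc : ℕ → V := fun k => if k = 0 then T else if k = n+2 then w else ρ (k-1)
    with hρc
  have hc0 : ρc 0 = T := by rw [hρc]; beta_reduce; rw [if_pos rfl]
  have hcend : ρc (n+2) = w := by
    rw [hρc]; beta_reduce; rw [if_neg (by omega), if_pos rfl]
  have hcmid : ∀ k, 1 ≤ k → k ≤ n+1 → ρc k = ρ (k-1) := by
    intro k h1 h2
    rw [hρc]; beta_reduce; rw [if_neg (by omega), if_neg (by omega)]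
  have hall : ∀ i j, i < j → j ≤ n+2 → ρc i ≠ ρc j := by
    intro i j hij hj
    rcases Nat.eq_zero_or_pos i with rfl | hi0
    · rw [hc0]
      rcases eq_or_lt_of_le hj with rfl | hj'
      · rw [hcend]; exact hne
      · rw [hcmid j (by omega) (by omega)]
        exact hTne (j-1) (by omega)
    · rcases eq_or_lt_of_le hj with rfl | hj'
      · rw [hcend, hcmid i (by omega) (by omega)]
        exact fun h => hwne (i-1) (by omega) h.symm
      · rw [hcmid i (by omega) (by omega), hcmid j (by omega) (by omega)]
        exact hinj (i-1) (j-1) (by omega) (by omega)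
  have hadj1 : ∀ i j, i < j → j ≤ n+2 → G.Adj (ρc i) (ρc j) → j = i+1 := by
    intro i j hij hj hadj
    rcases Nat.eq_zero_or_pos i with rfl | hi0
    · rw [hc0] at hadj
      rcases eq_or_lt_of_le hj with rfl | hj'
      · rw [hcend] at hadj; exact absurd hadj hTw
      · rw [hcmid j (by omega) (by omega)] at hadj
        rcases hadj with h | h | h
        · rcases Nat.eq_zero_or_pos (j-1) with hj0 | hj1
          · omega
          · exact absurd h (hTdir (j-1) hj1 (by omega))
        · exact absurd h (hdirT (j-1) (by omega))
        · exact absurd h (hTund (j-1) (by omega))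
    · rcases eq_or_lt_of_le hj with rfl | hj'
      · rw [hcend, hcmid i (by omega) (by omega)] at hadj
        rcases hadj with h | h | h
        · exact absurd h (hdirw (i-1) (by omega))
        · rcases eq_or_lt_of_le (show i - 1 ≤ n from by omega) with he | hlt
          · omega
          · exact absurd h (hwdir (i-1) hlt)
        · exact absurd (G.undir_symm _ _ h) (hwund (i-1) (by omega))
      · rw [hcmid i (by omega) (by omega), hcmid j (by omega) (by omega)] at hadj
        rcases hadj with h | h | h
        · exact absurd h (hnodir (i-1) (j-1) (by omega) (by omega) (by omega))
        · exact absurd h (hnodir (j-1) (i-1) (by omega) (by omega) (by omega))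
        · by_cases hc : j = i + 1
          · exact hc
          · exact absurd h (hchord (i-1) (j-1) (by omega) (by omega))
  refine ⟨by omega, hc0, hcend, ?_, ?_, ?_, ?_, ?_⟩
  · intro i j hi hj hij
    rcases lt_trichotomy i j with h | rfl | h
    · exact hall i j h hj
    · omega
    · exact fun he => hall j i h hi he.symm
  · rw [hcmid 1 le_rfl (by omega)]
    exact hT0
  · rw [hcmid (n+1) (by omega) le_rfl, show n+1-1 = n from rfl]
    exact hwn
  · intro i h1 h2
    rw [hcmid i h1 (by omega), hcmid (i+1) (by omega) (by omega),
      show i+1-1 = i from rfl]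
    have := hρw (i-1) (by omega)
    rw [show i-1+1 = i from by omega] at this
    exact this
  · intro i j hi hj hadj
    rcases lt_trichotomy i j with h | rfl | h
    · exact Or.inl (hadj1 i j h hj hadj)
    · exact absurd hadj (G.adj_irrefl _)
    · exact Or.inr (hadj1 j i h hi (G.adj_symm hadj))

variable {G}

/-- Starting from any left section boundary, an undirected run extends to a section. -/
lemma Route.exists_run (ω : Route G) :
    ∀ (d s : ℕ), ω.len - s ≤ d → s ≤ ω.len →
      ∃ e, s ≤ e ∧ e ≤ ω.len ∧
        (∀ k, s ≤ k → k < e → G.undir (ω.vtx k) (ω.vtx (k+1))) ∧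
        (e < ω.len → ¬ G.undir (ω.vtx e) (ω.vtx (e+1))) := by
  intro d
  induction d with
  | zero =>
    intro s hd hs
    exact ⟨s, le_rfl, hs, fun k h1 h2 => absurd (h1.trans_lt h2) (lt_irrefl _),
      fun h => absurd h (by omega)⟩
  | succ d IH =>
    intro s hd hs
    rcases eq_or_lt_of_le hs with heq | hs'
    · exact ⟨s, le_rfl, hs, fun k h1 h2 => absurd (h1.trans_lt h2) (lt_irrefl _),
        fun h => absurd h (by omega)⟩
    · by_cases hu : G.undir (ω.vtx s) (ω.vtx (s+1))
      · obtain ⟨e, he1, he2, he3, he4⟩ := IH (s+1) (by omega) (by omega)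
        refine ⟨e, by omega, he2, ?_, he4⟩
        intro k h1 h2
        rcases eq_or_lt_of_le h1 with rfl | h1'
        · exact hu
        · exact he3 k (by omega) h2
      · exact ⟨s, le_rfl, hs, fun k h1 h2 => absurd (h1.trans_lt h2) (lt_irrefl _),
          fun _ => hu⟩

lemma Route.exists_section (ω : Route G) (s : ℕ) (hs : s ≤ ω.len)
    (hcut : 0 < s → ¬ G.undir (ω.vtx (s-1)) (ω.vtx s)) :
    ∃ e, s ≤ e ∧ ω.IsSection s e := by
  obtain ⟨e, he1, he2, he3, he4⟩ := ω.exists_run (ω.len - s) s le_rfl hs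
  exact ⟨e, he1, he1, he2, he3, hcut, he4⟩

/-- The reverse of a route. -/
def Route.rev (ω : Route G) : Route G where
  len := ω.len
  vtx := fun i => ω.vtx (ω.len - i)
  link := by
    intro i hi
    have h := G.adj_symm (ω.link (ω.len - (i+1)) (by omega))
    rw [show ω.len - (i+1) + 1 = ω.len - i from by omega] at h
    exact h

@[simp] lemma Route.rev_len (ω : Route G) : ω.rev.len = ω.len := rfl
@[simp] lemma Route.rev_vtx (ω : Route G) (i : ℕ) :
    ω.rev.vtx i = ω.vtx (ω.len - i) := rfl

lemma Route.rev_sec (ω : Route G) {a b : ℕ} (h : ω.rev.IsSection a b) :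
    ω.IsSection (ω.len - b) (ω.len - a) := by
  obtain ⟨hab, hble, hmid, hl, hr⟩ := h
  rw [rev_len] at hble
  refine ⟨by omega, by omega, ?_, ?_, ?_⟩
  · intro k hk1 hk2
    have := hmid (ω.len - (k+1)) (by omega) (by omega)
    rw [rev_vtx, rev_vtx, show ω.len - (ω.len - (k+1)) = k+1 from by omega,
      show ω.len - (ω.len - (k+1) + 1) = k from by omega] at this
    exact G.undir_symm _ _ this
  · intro h0
    have := hr (by rw [rev_len]; omega)
    rw [rev_vtx, rev_vtx, show ω.len - (b+1) = ω.len - b - 1 from by omega] at this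
    exact fun hc => this (G.undir_symm _ _ hc)
  · intro h0
    have := hl (by omega)
    rw [rev_vtx, rev_vtx, show ω.len - (a-1) = ω.len - a + 1 from by omega] at this
    exact fun hc => this (G.undir_symm _ _ hc)

lemma Route.rev_col (ω : Route G) {a b : ℕ} (h : ω.rev.IsColliderSection a b) :
    ω.IsColliderSection (ω.len - b) (ω.len - a) := by
  obtain ⟨hsec, ha, hb, hdl, hdr⟩ := h
  have hab : a ≤ b := hsec.1
  have hble : b ≤ ω.len := hsec.2.1
  refine ⟨ω.rev_sec hsec, by rw [rev_len] at hb; omega, by omega, ?_, ?_⟩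
  · rw [rev_vtx, rev_vtx, show ω.len - (b+1) = ω.len - b - 1 from by omega] at hdr
    exact hdr
  · rw [rev_vtx, rev_vtx, show ω.len - (a-1) = ω.len - a + 1 from by omega] at hdl
    exact hdl

lemma Route.col_rev (ω : Route G) {a b : ℕ} (hsec : ω.rev.IsSection a b)
    (h : ω.IsColliderSection (ω.len - b) (ω.len - a)) :
    ω.rev.IsColliderSection a b := by
  obtain ⟨_, hb0, halen, hdl, hdr⟩ := h
  have hab : a ≤ b := hsec.1
  have hble : b ≤ ω.len := by have := hsec.2.1; rwa [rev_len] at this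
  refine ⟨hsec, by omega, by rw [rev_len]; omega, ?_, ?_⟩
  · rw [rev_vtx, rev_vtx, show ω.len - (a-1) = ω.len - a + 1 from by omega]
    exact hdr
  · rw [rev_vtx, rev_vtx, show ω.len - (b+1) = ω.len - b - 1 from by omega]
    exact hdl

lemma Route.rev_active (ω : Route G) {Z : Set V} (h : ω.Active Z) :
    ω.rev.Active Z := by
  constructor
  · intro a b hcol
    have hab : a ≤ b := hcol.1.1
    have hble : b ≤ ω.len := by have := hcol.1.2.1; rwa [rev_len] at this
    obtain ⟨k, hk1, hk2, hkz⟩ := h.1 _ _ (ω.rev_col hcol)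
    refine ⟨ω.len - k, by omega, by omega, ?_⟩
    rw [rev_vtx, show ω.len - (ω.len - k) = k from by omega]
    exact hkz
  · intro a b hsec hncol k hk1 hk2
    have hab : a ≤ b := hsec.1
    have hble : b ≤ ω.len := by have := hsec.2.1; rwa [rev_len] at this
    have hncol' : ¬ ω.IsColliderSection (ω.len - b) (ω.len - a) :=
      fun hc => hncol (ω.col_rev hsec hc)
    have := h.2 _ _ (ω.rev_sec hsec) hncol' (ω.len - k) (by omega) (by omega)
    rw [rev_vtx]
    exact this

/-- The suffix of a route from position `s` on. -/
def Route.drop (ω : Route G) (s : ℕ) (hs : s ≤ ω.len) : Route G where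
  len := ω.len - s
  vtx := fun i => ω.vtx (s + i)
  link := fun i hi => ω.link (s + i) (by omega)

@[simp] lemma Route.drop_len (ω : Route G) (s : ℕ) (hs : s ≤ ω.len) :
    (ω.drop s hs).len = ω.len - s := rfl
@[simp] lemma Route.drop_vtx (ω : Route G) (s : ℕ) (hs : s ≤ ω.len) (i : ℕ) :
    (ω.drop s hs).vtx i = ω.vtx (s + i) := rfl

lemma Route.drop_sec (ω : Route G) {s : ℕ} {hs : s ≤ ω.len} {a b : ℕ}
    (hcut : 0 < s → ¬ G.undir (ω.vtx (s-1)) (ω.vtx s))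
    (h : (ω.drop s hs).IsSection a b) : ω.IsSection (s+a) (s+b) := by
  obtain ⟨hab, hble, hmid, hl, hr⟩ := h
  rw [drop_len] at hble
  refine ⟨by omega, by omega, ?_, ?_, ?_⟩
  · intro k hk1 hk2
    have := hmid (k - s) (by omega) (by omega)
    rw [drop_vtx, drop_vtx, show s + (k - s) = k from by omega,
      show s + (k - s + 1) = k + 1 from by omega] at this
    exact this
  · intro h0
    rcases Nat.eq_zero_or_pos a with rfl | ha
    · have := hcut (by omega)
      rw [show s + 0 = s from rfl]
      exact this
    · have := hl ha
      rw [drop_vtx, drop_vtx, show s + (a-1) = s + a - 1 from by omega] at this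
      exact this
  · intro h0
    have := hr (by rw [drop_len]; omega)
    rw [drop_vtx, drop_vtx, show s + (b+1) = s + b + 1 from by omega] at this
    exact this

lemma Route.drop_col (ω : Route G) {s : ℕ} {hs : s ≤ ω.len} {a b : ℕ}
    (hcut : 0 < s → ¬ G.undir (ω.vtx (s-1)) (ω.vtx s))
    (h : (ω.drop s hs).IsColliderSection a b) : ω.IsColliderSection (s+a) (s+b) := by
  obtain ⟨hsec, ha, hb, hdl, hdr⟩ := h
  rw [drop_len] at hb
  refine ⟨ω.drop_sec hcut hsec, by omega, by omega, ?_, ?_⟩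
  · rw [drop_vtx, drop_vtx, show s + (a-1) = s + a - 1 from by omega] at hdl
    exact hdl
  · rw [drop_vtx, drop_vtx, show s + (b+1) = s + b + 1 from by omega] at hdr
    exact hdr

lemma Route.col_drop (ω : Route G) {s : ℕ} {hs : s ≤ ω.len} {a b : ℕ}
    (hdcut : 0 < s → ¬ G.dir (ω.vtx (s-1)) (ω.vtx s))
    (hsec : (ω.drop s hs).IsSection a b)
    (h : ω.IsColliderSection (s+a) (s+b)) : (ω.drop s hs).IsColliderSection a b := by
  obtain ⟨_, ha0, hblen, hdl, hdr⟩ := h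
  rcases Nat.eq_zero_or_pos a with rfl | ha
  · exfalso
    rw [show s + 0 = s from rfl] at hdl ha0
    exact hdcut ha0 hdl
  · refine ⟨hsec, ha, by rw [drop_len]; omega, ?_, ?_⟩
    · rw [drop_vtx, drop_vtx, show s + (a-1) = s + a - 1 from by omega]
      exact hdl
    · rw [drop_vtx, drop_vtx, show s + (b+1) = s + b + 1 from by omega]
      exact hdr

lemma Route.drop_active (ω : Route G) {s : ℕ} {hs : s ≤ ω.len} {Z : Set V}
    (hcut : 0 < s → ¬ G.undir (ω.vtx (s-1)) (ω.vtx s))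
    (hdcut : 0 < s → ¬ G.dir (ω.vtx (s-1)) (ω.vtx s))
    (h : ω.Active Z) : (ω.drop s hs).Active Z := by
  constructor
  · intro a b hcol
    obtain ⟨k, hk1, hk2, hkz⟩ := h.1 _ _ (ω.drop_col hcut hcol)
    refine ⟨k - s, by omega, by omega, ?_⟩
    rw [drop_vtx, show s + (k - s) = k from by omega]
    exact hkz
  · intro a b hsec hncol k hk1 hk2
    have hncol' : ¬ ω.IsColliderSection (s+a) (s+b) :=
      fun hc => hncol (ω.col_drop hdcut hsec hc)
    have := h.2 _ _ (ω.drop_sec hcut hsec) hncol' (s+k) (by omega) (by omega)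
    rw [drop_vtx]
    exact this

lemma mem_mb_of_ch {T u : V} (h : G.dir T u) : u ∈ G.mb T :=
  Or.inl (Or.inr h)

lemma mem_mb_of_pa {T u : V} (h : G.dir u T) : u ∈ G.mb T :=
  Or.inl (Or.inl (Or.inl h))

lemma mem_mb_of_nb {T u : V} (h : G.undir T u) : u ∈ G.mb T :=
  Or.inl (Or.inl (Or.inr (G.undir_symm _ _ h)))

lemma mem_mb_of_csp {T u : V} (h : u ∈ G.csp T) : u ∈ G.mb T :=
  Or.inr h

/-- Key lemma: there is no active route (w.r.t. `Mb(T)`) from `T` to a vertex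
outside `{T} ∪ Mb(T)`. -/
lemma no_active_from (T : V) : ∀ (N : ℕ) (ω : Route G), ω.len ≤ N →
    ω.vtx 0 = T → ω.vtx ω.len ∉ ({T} : Set V) ∪ G.mb T →
    ¬ ω.Active (G.mb T) := by
  intro N
  induction N with
  | zero =>
    intro ω hlen h0 hend _
    apply hend
    have hl : ω.len = 0 := by omega
    rw [hl, h0]
    exact Or.inl rfl
  | succ N IH =>
    intro ω hlen h0 hend hA
    have hlen1 : 1 ≤ ω.len := by
      by_contra h
      apply hend
      have hl : ω.len = 0 := by omega
      rw [hl, h0]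
      exact Or.inl rfl
    -- the section containing position 0 is the singleton {0}
    obtain ⟨b0, hb00, hsec0⟩ := ω.exists_section 0 (by omega)
      (fun h => absurd h (lt_irrefl 0))
    have hb0 : b0 = 0 := by
      by_contra h
      have h1 : G.undir (ω.vtx 0) (ω.vtx 1) := hsec0.2.2.1 0 le_rfl (by omega)
      have hmem : ω.vtx 1 ∈ G.mb T := mem_mb_of_nb (by rw [← h0]; exact h1)
      have hnc : ¬ ω.IsColliderSection 0 b0 := fun hc => absurd hc.2.1 (lt_irrefl 0)
      exact hA.2 0 b0 hsec0 hnc 1 (by omega) (by omega) hmem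
    have hnu0 : ¬ G.undir (ω.vtx 0) (ω.vtx 1) := by
      have h5 := hsec0.2.2.2.2
      rw [hb0] at h5
      exact h5 (by omega)
    rcases ω.link 0 (by omega) with hd01 | hd10 | hu01
    · -- first edge T → vtx 1
      obtain ⟨b, hb1, hsec⟩ := ω.exists_section 1 (by omega) (fun _ => hnu0)
      have hcol : ω.IsColliderSection 1 b := by
        by_contra hnc
        exact hA.2 1 b hsec hnc 1 le_rfl hb1
          (mem_mb_of_ch (by rw [← h0]; exact hd01))
      obtain ⟨-, -, hblen, -, hdr⟩ := hcol
      have hnuW : ¬ G.undir (ω.vtx b) (ω.vtx (b+1)) :=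
        fun h => G.dir_not_undir _ _ hdr (G.undir_symm _ _ h)
      obtain ⟨b2, hb2, hsecW⟩ := ω.exists_section (b+1) (by omega) (fun _ => hnuW)
      have hncW : ¬ ω.IsColliderSection (b+1) b2 :=
        fun hc => G.dir_asymm _ _ hdr hc.2.2.2.1
      have hWnotZ : ω.vtx (b+1) ∉ G.mb T :=
        hA.2 (b+1) b2 hsecW hncW (b+1) le_rfl hb2
      by_cases hwT : ω.vtx (b+1) = T
      · -- the route returns to T: recurse on the suffix
        have hdcut : ¬ G.dir (ω.vtx b) (ω.vtx (b+1)) := fun h => G.dir_asymm _ _ hdr h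
        have hA2 : (ω.drop (b+1) (by omega)).Active (G.mb T) :=
          ω.drop_active (fun _ => hnuW) (fun _ => hdcut) hA
        refine IH (ω.drop (b+1) (by omega)) (by rw [Route.drop_len]; omega) ?_ ?_ hA2
        · rw [Route.drop_vtx]
          exact hwT
        · rw [Route.drop_vtx, Route.drop_len,
            show b + 1 + (ω.len - (b+1)) = ω.len from by omega]
          exact hend
      · by_cases hadjW : G.Adj T (ω.vtx (b+1))
        · apply hWnotZ
          rcases hadjW with h | h | h
          exacts [mem_mb_of_ch h, mem_mb_of_pa h, mem_mb_of_nb h]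
        · apply hWnotZ
          apply mem_mb_of_csp
          exact G.csp_of_walk T (ω.vtx (b+1)) (ω.vtx 1) (ω.vtx b) hadjW
            (fun h => hwT h.symm) (by rw [← h0]; exact hd01) hdr
            (b-1) (fun i => ω.vtx (1+i)) rfl (congrArg ω.vtx (by omega))
            (fun i hi => hsec.2.2.1 (1+i) (by omega) (by omega))
    · -- first edge vtx 1 → T : vtx 1 is a parent of T, in a non-collider section
      obtain ⟨b1, hb1, hsec1⟩ := ω.exists_section 1 (by omega) (fun _ => hnu0)
      have hnc : ¬ ω.IsColliderSection 1 b1 :=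
        fun hc => G.dir_asymm _ _ hd10 hc.2.2.2.1
      exact hA.2 1 b1 hsec1 hnc 1 le_rfl hb1
        (mem_mb_of_pa (by rw [← h0]; exact hd10))
    · exact hnu0 hu01

/-- Any vertex adjacent to `T` belongs to every separating set. -/
lemma adj_mem_sep (T : V) (S : Set V) (hT : T ∉ S)
    (hsep : G.CSep {T} (Set.univ \ ({T} ∪ S)) S) :
    ∀ m, G.Adj T m → m ∈ S := by
  intro m hadj
  by_contra hm
  have hmT : m ≠ T := fun h => G.adj_irrefl T (by rw [h] at hadj; exact hadj)
  have hlink : ∀ i < 1, G.Adj ((fun j => if j = 0 then T else m) i)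
      ((fun j => if j = 0 then T else m) (i+1)) := by
    intro i hi
    have : i = 0 := by omega
    subst this
    beta_reduce
    rw [if_pos rfl, if_neg (by omega)]
    exact hadj
  set ω : Route G := ⟨1, fun j => if j = 0 then T else m, hlink⟩ with hω
  have hv0 : ω.vtx 0 = T := rfl
  have hv1 : ω.vtx 1 = m := rfl
  refine hsep ω (Or.inl ⟨by rw [hv0]; exact rfl, ⟨trivial, ?_⟩⟩) ⟨?_, ?_⟩
  · rw [hv1]
    rintro (h | h)
    · exact hmT h
    · exact hm h
  · intro a b hcol
    exfalso
    have h1 : a ≤ b := hcol.1.1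
    have h3 : 0 < a := hcol.2.1
    have h4 : b < 1 := hcol.2.2.1
    omega
  · intro a b hsec hnc k hk1 hk2 hkS
    have hk : k ≤ 1 := hk2.trans hsec.2.1
    rcases Nat.eq_zero_or_pos k with rfl | hk0
    · rw [hv0] at hkS; exact hT hkS
    · have : k = 1 := by omega
      rw [this, hv1] at hkS
      exact hm hkS

/-- Any complex-spouse of `T` belongs to every separating set. -/
lemma csp_mem_sep (T : V) (S : Set V) (hT : T ∉ S)
    (hsep : G.CSep {T} (Set.univ \ ({T} ∪ S)) S) :
    ∀ m ∈ G.csp T, m ∈ S := by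
  intro m hm
  obtain ⟨n, ρ, hn1, h0, hend, hdist, hdT, hdm, hund, hind⟩ := hm
  by_contra hmS
  have hmT : m ≠ T := by
    intro h
    exact hdist 0 (n+1) (Nat.zero_le _) le_rfl (by omega) (by rw [h0, hend, h])
  have hρ1 : ρ 1 ∈ S := adj_mem_sep T S hT hsep (ρ 1) (Or.inl hdT)
  have hlink : ∀ i < n+1, G.Adj (ρ i) (ρ (i+1)) := by
    intro i hi
    rcases Nat.eq_zero_or_pos i with rfl | hi0
    · refine Or.inl ?_
      rw [h0]
      exact hdT
    · rcases eq_or_lt_of_le (show i ≤ n from by omega) with rfl | hi'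
      · refine Or.inr (Or.inl ?_)
        rw [hend]
        exact hdm
      · exact Or.inr (Or.inr (hund i hi0 hi'))
  set ω : Route G := ⟨n+1, ρ, hlink⟩ with hω
  have hv : ∀ i, ω.vtx i = ρ i := fun _ => rfl
  refine hsep ω (Or.inl ⟨h0, ⟨trivial, ?_⟩⟩) ⟨?_, ?_⟩
  · show ρ (n+1) ∉ _
    rw [hend]
    rintro (h | h)
    · exact hmT h
    · exact hmS h
  · -- collider sections: the only one is (1, n), which contains ρ 1 ∈ S
    intro a b hcol
    obtain ⟨hsec, ha0, hblen, hdl, hdr⟩ := hcol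
    have hab : a ≤ b := hsec.1
    have hblen' : b < n+1 := hblen
    have hmax_l := hsec.2.2.2.1 ha0
    have hmax_r := hsec.2.2.2.2 hblen
    have ha1 : a = 1 := by
      by_contra hc
      have h1 : 1 ≤ a - 1 ∧ a - 1 < n := by omega
      have := hund (a-1) h1.1 h1.2
      rw [show a - 1 + 1 = a from by omega] at this
      exact hmax_l this
    have hbn : b = n := by
      by_contra hc
      have h1 : 1 ≤ b ∧ b < n := by omega
      exact hmax_r (hund b h1.1 h1.2)
    exact ⟨1, by omega, by omega, Or.inl hρ1⟩
  · intro a b hsec hnc k hk1 hk2 hkS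
    have hk : k ≤ n+1 := hk2.trans hsec.2.1
    have hab : a ≤ b := hsec.1
    have hble : b ≤ n+1 := hsec.2.1
    rcases Nat.eq_zero_or_pos k with rfl | hk0
    · show False
      have : ρ 0 ∈ S := hkS
      rw [h0] at this
      exact hT this
    · rcases eq_or_lt_of_le hk with hke | hk'
      · have : ρ (n+1) ∈ S := by rw [← hke]; exact hkS
        rw [hend] at this
        exact hmS this
      · -- 1 ≤ k ≤ n : then the section must be the collider (1, n)
        apply hnc
        have hble' : b ≤ n+1 := hble
        have hblt : b < n+1 := by
          by_contra hbc
          have := hsec.2.2.1 n (by omega) (by omega)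
          simp only [hv] at this
          rw [hend] at this
          exact G.dir_not_undir _ _ hdm (G.undir_symm _ _ this)
        have ha1 : a = 1 := by
          rcases Nat.eq_zero_or_pos a with rfl | ha0
          · exfalso
            have := hsec.2.2.1 0 le_rfl (by omega)
            simp only [hv] at this
            rw [h0] at this
            exact G.dir_not_undir _ _ hdT this
          · by_contra hc
            have hmax_l := hsec.2.2.2.1 ha0
            have h1 : 1 ≤ a - 1 ∧ a - 1 < n := by omega
            have := hund (a-1) h1.1 h1.2
            rw [show a - 1 + 1 = a from by omega] at this
            exact hmax_l this
        have hbn : b = n := by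
          by_contra hc
          have hmax_r := hsec.2.2.2.2 hblt
          have h1 : 1 ≤ b ∧ b < n := by omega
          exact hmax_r (hund b h1.1 h1.2)
        refine ⟨hsec, by omega, hblt, ?_, ?_⟩
        · simp only [hv]
          rw [ha1, show (1:ℕ) - 1 = 0 from rfl, h0]
          exact hdT
        · simp only [hv]
          rw [hbn, hend]
          exact hdm

end ChainGraph

end LWF

namespace LWF

/-- `Mb(T)` is the unique inclusion-minimal set `S ⊆ V ∖ {T}`
such that `T` is c-separated from every vertex of `V ∖ ({T} ∪ S)` given `S`:
`Mb(T)` itself has this separating property (and avoids `T`), and every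
`S ⊆ V ∖ {T}` with this property satisfies `Mb(T) ⊆ S`. -/
theorem mb_unique_minimal_separator {V : Type*} [Fintype V] (G : ChainGraph V) (T : V) :
    T ∉ G.mb T ∧
    G.CSep {T} (Set.univ \ ({T} ∪ G.mb T)) (G.mb T) ∧
    (∀ S : Set V, T ∉ S → G.CSep {T} (Set.univ \ ({T} ∪ S)) S → G.mb T ⊆ S) := by
  refine ⟨?_, ?_, ?_⟩
  · rintro (((h | h) | h) | h)
    · exact G.dir_irrefl T h
    · exact G.undir_irrefl T h
    · exact G.dir_irrefl T h
    · obtain ⟨n, ρ, hn1, h0, hend, hdist, -⟩ := h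
      exact hdist 0 (n+1) (Nat.zero_le _) le_rfl (by omega) (by rw [h0, hend])
  · intro ω hends
    rcases hends with ⟨h1, h2⟩ | ⟨h1, h2⟩
    · exact ChainGraph.no_active_from T ω.len ω le_rfl h1 h2.2
    · intro hA
      refine ChainGraph.no_active_from T ω.rev.len ω.rev le_rfl ?_ ?_ (ω.rev_active hA)
      · rw [ChainGraph.Route.rev_vtx, Nat.sub_zero]
        exact h2
      · rw [ChainGraph.Route.rev_vtx, ChainGraph.Route.rev_len, Nat.sub_self]
        exact h1.2
  · intro S hTS hsep m hm
    rcases hm with ((h | h) | h) | h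
    · exact ChainGraph.adj_mem_sep T S hTS hsep m (Or.inr (Or.inl h))
    · exact ChainGraph.adj_mem_sep T S hTS hsep m (Or.inr (Or.inr (G.undir_symm _ _ h)))
    · exact ChainGraph.adj_mem_sep T S hTS hsep m (Or.inl h)
    · exact ChainGraph.csp_mem_sep T S hTS hsep m h

end LWF
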